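/- With R = ℤ/pℤ[t,t⁻¹] (p > 1) and T⁻¹ = [[0,0,-1],[1,0,-1],[0,1,-1]]: if v ∈ R³ has v₀ ≠ 0 with ord(v₀) = n and ord(v₁), ord(v₂) ≥ n+2, then w = T⁻¹v satisfies ord(w₁) = n and ord(w₀), ord(w₂) ≥ n+2; that is, T⁻¹ maps X₁ into X₃. -/

import Mathlib

open LaurentPolynomial

/-- lowest degree of `f` is at least `n` (ord 0 = +∞). -/
def ordGE {R : Type*} [CommRing R] (f : LaurentPolynomial R) (n : ℤ) : Prop :=
  ∀ m : ℤ, m < n → f.coeff m = 0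

/-- lowest degree of `f` is exactly `n`. -/
def ordEq {R : Type*} [CommRing R] (f : LaurentPolynomial R) (n : ℤ) : Prop :=
  f.coeff n ≠ 0 ∧ ordGE f n

/-- The matrix T⁻¹. -/
noncomputable def Ti (p : ℕ) : Matrix (Fin 3) (Fin 3) (LaurentPolynomial (ZMod p)) :=
  !![0, 0, -1; 1, 0, -1; 0, 1, -1]

/-- T⁻¹ maps X₁ into X₃: if ord(v₀) = n and ord(v₁), ord(v₂) ≥ n+2, then
w = T⁻¹v satisfies ord(w₁) = n and ord(w₀), ord(w₂) ≥ n+2. -/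
theorem Tinv_maps_X1_to_X3 (p : ℕ) [Fact (1 < p)]
    (v : Fin 3 → LaurentPolynomial (ZMod p)) (n : ℤ)
    (h0 : ordEq (v 0) n) (h1 : ordGE (v 1) (n + 2)) (h2 : ordGE (v 2) (n + 2)) :
    ordEq ((Ti p).mulVec v 1) n ∧ ordGE ((Ti p).mulVec v 0) (n + 2) ∧
      ordGE ((Ti p).mulVec v 2) (n + 2) := by
  obtain ⟨h0n, h0ge⟩ := h0
  have e0 : (Ti p).mulVec v 0 = -v 2 := by
    simp [Ti, Matrix.mulVec, dotProduct, Fin.sum_univ_three]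
  have e1 : (Ti p).mulVec v 1 = v 0 - v 2 := by
    simp [Ti, Matrix.mulVec, dotProduct, Fin.sum_univ_three]; ring
  have e2 : (Ti p).mulVec v 2 = v 1 - v 2 := by
    simp [Ti, Matrix.mulVec, dotProduct, Fin.sum_univ_three]; ring
  have subap : ∀ (f g : LaurentPolynomial (ZMod p)) (m : ℤ), (f - g).coeff m = f.coeff m - g.coeff m :=
    fun _ _ _ => rfl
  have negap : ∀ (f : LaurentPolynomial (ZMod p)) (m : ℤ), (-f).coeff m = -(f.coeff m) :=
    fun _ _ => rfl
  refine ⟨⟨?_, ?_⟩, ?_, ?_⟩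
  · rw [e1]
    have : (v 2).coeff n = 0 := h2 n (by linarith)
    simpa [subap, this] using h0n
  · intro m hm
    rw [e1]
    simp [subap, h0ge m hm, h2 m (by linarith)]
  · intro m hm
    rw [e0]
    simp [negap, h2 m hm]
  · intro m hm
    rw [e2]
    simp [subap, h1 m hm, h2 m hm]
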